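/- Let α ∈ ℝ. Assume there exist sequences of rationals (p_n/q_n) and (p′_n/q′_n) with q_n, q′_n ≥ 1, and sequences of reals (θ_n), (δ_n), (τ_n) with θ_n ≥ 1, δ_n > 0, τ_n > 0, and positive constants C, c₁, c₂, c₃, c₄, c₅ such that for all n: (a) q′_n ≤ C·q_n^{θ_n}; (b) c₁·q_n^{−1−δ_n} ≤ |α − p_n/q_n| ≤ c₂·q_n^{−1−δ_n} and c₃·(q′_n)^{−1−τ_n} ≤ |α − p′_n/q′_n| ≤ c₄·(q′_n)^{−1−τ_n}; (c) (q′_n)^{τ_n} ≥ c₅·q_{n+1}^{δ_{n+1}}, and q_n^{δ_n} → ∞ as n → ∞. Then μ(α) ≤ limsup_{n→∞} max{1 + θ_n/δ_n, (1 + τ_n)·θ_n/δ_n}. -/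

import Mathlib

open Polynomial Filter

section helpers

lemma aux_rat_lb (x : ℚ) (P Q : ℤ) (hQ : 1 ≤ Q) (hne : (x:ℝ) ≠ (P:ℝ)/(Q:ℝ)) :
    1/((x.den:ℝ)*(Q:ℝ)) ≤ |(x:ℝ) - (P:ℝ)/(Q:ℝ)| := by
  have hQ0 : (0:ℝ) < (Q:ℝ) := by exact_mod_cast hQ.trans_lt' zero_lt_one
  have hd0 : (0:ℝ) < (x.den:ℝ) := by exact_mod_cast x.pos
  have hcast : (x:ℝ) = (x.num:ℝ)/(x.den:ℝ) := by rw [Rat.cast_def]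
  set D : ℤ := x.num * Q - (x.den:ℤ) * P with hD
  have hrepr : (x:ℝ) - (P:ℝ)/(Q:ℝ) = (D:ℝ)/((x.den:ℝ)*(Q:ℝ)) := by
    rw [hcast]
    push_cast [hD]
    field_simp
  have hDne : D ≠ 0 := by
    intro h0
    apply hne
    have h2 : (x:ℝ) - (P:ℝ)/(Q:ℝ) = 0 := by rw [hrepr, h0]; simp
    linarith [h2]
  have h1 : (1:ℝ) ≤ |(D:ℝ)| := by exact_mod_cast Int.one_le_abs hDne
  rw [hrepr, abs_div, abs_of_pos (by positivity : (0:ℝ) < (x.den:ℝ)*(Q:ℝ))]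
  exact div_le_div_of_nonneg_right h1 (by positivity)

lemma aux_fin (α : ℝ) (B : ℕ) : {x : ℚ | x.den ≤ B ∧ |α - (x:ℝ)| ≤ 1}.Finite := by
  set N : ℤ := ⌈(|α|+1)*B⌉ with hN
  have hsub : {x : ℚ | x.den ≤ B ∧ |α - (x:ℝ)| ≤ 1} ⊆
      (fun x : ℚ => (x.num, x.den)) ⁻¹' (Set.Icc (-N) N ×ˢ Set.Iic B) := by
    rintro x ⟨hden, hclose⟩
    have hd0 : (0:ℝ) < (x.den:ℝ) := by exact_mod_cast x.pos
    have hxb : |(x:ℝ)| ≤ |α| + 1 := by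
      have := abs_sub_abs_le_abs_sub (x:ℝ) α
      rw [abs_sub_comm] at this
      linarith
    have hnum : |(x.num:ℝ)| ≤ (|α|+1) * B := by
      have hcast : (x:ℝ) = (x.num:ℝ)/(x.den:ℝ) := by rw [Rat.cast_def]
      have h1 : |(x.num:ℝ)| = |(x:ℝ)| * x.den := by
        rw [hcast, abs_div, abs_of_pos hd0, div_mul_cancel₀ _ (ne_of_gt hd0)]
      rw [h1]
      have hBd : (x.den:ℝ) ≤ (B:ℝ) := by exact_mod_cast hden
      have h0 : (0:ℝ) ≤ |(x:ℝ)| := abs_nonneg _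
      nlinarith [abs_nonneg α]
    have hnum' : |x.num| ≤ N := by
      have : ((|x.num|:ℤ):ℝ) ≤ (N:ℝ) := by
        push_cast
        exact hnum.trans (Int.le_ceil _)
      exact_mod_cast this
    constructor
    · simp only [Set.mem_Icc]
      exact abs_le.mp hnum'
    · exact hden
  refine Set.Finite.subset (Set.Finite.preimage ?_ ?_) hsub
  · have hinj : Function.Injective (fun x : ℚ => (x.num, x.den)) := by
      intro a b h
      simp only [Prod.mk.injEq] at h
      exact Rat.ext h.1 h.2
    exact hinj.injOn
  · exact (Set.finite_Icc _ _).prod (Set.finite_Iic _)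

lemma aux_qtend (α : ℝ) (p q : ℕ → ℤ) (hq : ∀ n, 1 ≤ q n)
    (δ : ℕ → ℝ) (hδ : ∀ n, 0 < δ n) (c₁ c₂ : ℝ) (hc₁ : 0 < c₁) (hc₂ : 0 < c₂)
    (hb₁ : ∀ n, c₁ * (q n : ℝ) ^ (-(1 + δ n)) ≤ |α - (p n : ℝ) / (q n : ℝ)|)
    (hb₂ : ∀ n, |α - (p n : ℝ) / (q n : ℝ)| ≤ c₂ * (q n : ℝ) ^ (-(1 + δ n)))
    (htend : Tendsto (fun n => (q n : ℝ) ^ (δ n)) atTop atTop) :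
    Tendsto (fun n => (q n : ℝ)) atTop atTop := by
  rw [tendsto_atTop]
  intro M
  by_contra h
  have hT : {n | (q n : ℝ) < M}.Infinite := by
    rw [← Nat.frequently_atTop_iff_infinite]
    have := Filter.not_eventually.mp h
    exact this.mono (fun n hn => lt_of_not_ge hn)
  set T := {n | (q n : ℝ) < M} with hTdef
  have hqpos : ∀ n, (0:ℝ) < (q n : ℝ) := fun n => by exact_mod_cast (hq n).trans_lt' zero_lt_one
  have hq1 : ∀ n, (1:ℝ) ≤ (q n : ℝ) := fun n => by exact_mod_cast hq n
  have hpb : ∀ n ∈ T, |(p n : ℝ)| ≤ (|α| + c₂) * M := by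
    intro n hn
    have hrp : (q n : ℝ) ^ (-(1 + δ n)) ≤ 1 :=
      Real.rpow_le_one_of_one_le_of_nonpos (hq1 n) (by linarith [(hδ n).le])
    have hd : |α - (p n : ℝ) / (q n : ℝ)| ≤ c₂ := (hb₂ n).trans (by nlinarith)
    have hfrac : |(p n : ℝ) / (q n : ℝ)| ≤ |α| + c₂ := by
      have := abs_sub_abs_le_abs_sub ((p n : ℝ)/(q n : ℝ)) α
      rw [abs_sub_comm] at this
      linarith
    have hqM : (q n : ℝ) ≤ M := (hn : (q n : ℝ) < M).le
    have h1 : |(p n : ℝ)| = |(p n : ℝ)/(q n : ℝ)| * (q n : ℝ) := by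
      rw [abs_div, abs_of_pos (hqpos n), div_mul_cancel₀ _ (ne_of_gt (hqpos n))]
    rw [h1]
    have h0 : (0:ℝ) ≤ |(p n:ℝ)/(q n:ℝ)| := abs_nonneg _
    nlinarith [abs_nonneg α, hq1 n]
  have hM1 : (1:ℝ) < M := by
    obtain ⟨n, hn⟩ := hT.nonempty
    exact lt_of_le_of_lt (hq1 n) hn
  set A : ℤ := ⌈(|α| + c₂) * M⌉ with hA
  set Mz : ℤ := ⌈M⌉ with hMz
  set F : Set (ℤ × ℤ) := Set.Icc (-A) A ×ˢ Set.Icc 1 Mz with hF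
  set f : ℕ → ℤ × ℤ := fun n => (p n, q n) with hf
  have hcover : ∀ n ∈ T, f n ∈ F := by
    intro n hn
    constructor
    · simp only [Set.mem_Icc]
      have h1 : |(p n : ℝ)| ≤ (A:ℝ) := (hpb n hn).trans (Int.le_ceil _)
      have h2 : |p n| ≤ A := by exact_mod_cast h1
      exact abs_le.mp h2
    · simp only [Set.mem_Icc]
      refine ⟨hq n, ?_⟩
      have : (q n : ℝ) ≤ (Mz : ℝ) := le_trans (le_of_lt hn) (Int.le_ceil _)
      exact_mod_cast this
  have hex : ∃ y ∈ F, (T ∩ f ⁻¹' {y}).Infinite := by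
    by_contra hall
    push_neg at hall
    have hfin : (⋃ y ∈ F, T ∩ f ⁻¹' {y}).Finite :=
      Set.Finite.biUnion ((Set.finite_Icc _ _).prod (Set.finite_Icc _ _))
        (fun y hy => hall y hy)
    exact hT (hfin.subset (fun n hn => Set.mem_biUnion (hcover n hn) ⟨hn, rfl⟩))
  obtain ⟨⟨P, Q⟩, _, hfib⟩ := hex
  have hmem : ∀ n ∈ T ∩ f ⁻¹' {(P, Q)}, p n = P ∧ q n = Q := by
    intro n hn
    have := hn.2
    simp only [Set.mem_preimage, Set.mem_singleton_iff, hf, Prod.mk.injEq] at this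
    exact this
  obtain ⟨n₀, hn₀⟩ := hfib.nonempty
  obtain ⟨hp₀, hq₀⟩ := hmem n₀ hn₀
  have hQ1 : (1:ℝ) ≤ (Q:ℝ) := hq₀ ▸ hq1 n₀
  have hQ0 : (0:ℝ) < (Q:ℝ) := lt_of_lt_of_le zero_lt_one hQ1
  set d : ℝ := |α - (P:ℝ)/(Q:ℝ)| with hd
  have hd0 : 0 < d := by
    have := hb₁ n₀
    rw [hp₀, hq₀] at this
    exact lt_of_lt_of_le (by positivity) this
  obtain ⟨N, hN⟩ := eventually_atTop.mp (htend.eventually_ge_atTop (c₂ / d + 1))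
  obtain ⟨n, hnT, hnN⟩ := hfib.exists_gt N
  obtain ⟨hpn, hqn⟩ := hmem n hnT
  have hbig : c₂ / d < (Q:ℝ) ^ (δ n) := by
    have := hN n hnN.le
    rw [hqn] at this
    linarith
  have hcontra : d ≤ c₂ * (Q:ℝ) ^ (-(1 + δ n)) := by
    have := hb₂ n
    rw [hpn, hqn] at this
    exact this
  have hsplit : (Q:ℝ) ^ (1 + δ n) = (Q:ℝ) * (Q:ℝ) ^ (δ n) := by
    rw [Real.rpow_add hQ0, Real.rpow_one]
  have hQδ : (0:ℝ) < (Q:ℝ) ^ (δ n) := Real.rpow_pos_of_pos hQ0 _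
  rw [Real.rpow_neg hQ0.le, hsplit] at hcontra
  have hfin : d * ((Q:ℝ) * (Q:ℝ)^(δ n)) ≤ c₂ := by
    calc d * ((Q:ℝ) * (Q:ℝ)^(δ n)) ≤ (c₂ * ((Q:ℝ) * (Q:ℝ)^(δ n))⁻¹) * ((Q:ℝ) * (Q:ℝ)^(δ n)) :=
          mul_le_mul_of_nonneg_right hcontra (by positivity)
      _ = c₂ := by field_simp
  have hbig' : c₂ < (Q:ℝ)^(δ n) * d := (div_lt_iff₀ hd0).mp hbig
  nlinarith [mul_nonneg (by linarith : (0:ℝ) ≤ (Q:ℝ) - 1) (by positivity : (0:ℝ) ≤ d * (Q:ℝ)^(δ n))]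

end helpers

/-- The irrationality exponent of a real number `ξ`: the supremum (in `EReal`) of all real `m`
such that `|ξ - p/q| < q^{-m}` holds for infinitely many rationals `p/q` (`q ≥ 1`). -/
noncomputable def irrationalityExponent (ξ : ℝ) : EReal :=
  sSup {μ : EReal | ∃ m : ℝ, μ = (m : EReal) ∧
    {x : ℚ | |ξ - (x : ℝ)| < (x.den : ℝ) ^ (-m)}.Infinite}

set_option maxHeartbeats 2000000 in
/-- **Proposition 1.** Let `α ∈ ℝ`. Given two sequences of rational approximations `p_n/q_n`,
`p'_n/q'_n` (`q_n, q'_n ≥ 1`) and sequences `θ_n ≥ 1`, `δ_n > 0`, `τ_n > 0` with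
(a) `q'_n ≤ C·q_n^{θ_n}`, (b) `|α - p_n/q_n| ≍ q_n^{-1-δ_n}`, `|α - p'_n/q'_n| ≍ (q'_n)^{-1-τ_n}`,
(c) `(q'_n)^{τ_n} ≥ c₅·q_{n+1}^{δ_{n+1}}` and `q_n^{δ_n} → ∞`, one has
`μ(α) ≤ limsup_n max{1 + θ_n/δ_n, (1 + τ_n)·θ_n/δ_n}`. -/
theorem statement5
    (α : ℝ) (p p' : ℕ → ℤ) (q q' : ℕ → ℤ)
    (hq : ∀ n, 1 ≤ q n) (hq' : ∀ n, 1 ≤ q' n)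
    (θ δ τ : ℕ → ℝ)
    (hθ : ∀ n, 1 ≤ θ n) (hδ : ∀ n, 0 < δ n) (hτ : ∀ n, 0 < τ n)
    (C c₁ c₂ c₃ c₄ c₅ : ℝ)
    (hC : 0 < C) (hc₁ : 0 < c₁) (hc₂ : 0 < c₂) (hc₃ : 0 < c₃) (hc₄ : 0 < c₄) (hc₅ : 0 < c₅)
    (ha : ∀ n, (q' n : ℝ) ≤ C * (q n : ℝ) ^ (θ n))
    (hb₁ : ∀ n, c₁ * (q n : ℝ) ^ (-(1 + δ n)) ≤ |α - (p n : ℝ) / (q n : ℝ)|)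
    (hb₂ : ∀ n, |α - (p n : ℝ) / (q n : ℝ)| ≤ c₂ * (q n : ℝ) ^ (-(1 + δ n)))
    (hb₃ : ∀ n, c₃ * (q' n : ℝ) ^ (-(1 + τ n)) ≤ |α - (p' n : ℝ) / (q' n : ℝ)|)
    (hb₄ : ∀ n, |α - (p' n : ℝ) / (q' n : ℝ)| ≤ c₄ * (q' n : ℝ) ^ (-(1 + τ n)))
    (hc₅' : ∀ n, c₅ * (q (n + 1) : ℝ) ^ (δ (n + 1)) ≤ (q' n : ℝ) ^ (τ n))
    (htend : Filter.Tendsto (fun n => (q n : ℝ) ^ (δ n)) Filter.atTop Filter.atTop) :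
    irrationalityExponent α ≤
      Filter.limsup
        (fun n => ((max (1 + θ n / δ n) ((1 + τ n) * θ n / δ n) : ℝ) : EReal))
        Filter.atTop := by
  classical
  set L : EReal := Filter.limsup
      (fun n => ((max (1 + θ n / δ n) ((1 + τ n) * θ n / δ n) : ℝ) : EReal)) Filter.atTop with hLdef
  have hL1 : (1:EReal) ≤ L := by
    have h1 : ∀ n : ℕ, (1:EReal) ≤ ((max (1 + θ n / δ n) ((1 + τ n) * θ n / δ n) : ℝ) : EReal) := by
      intro n
      have h2 : (1:ℝ) ≤ max (1 + θ n / δ n) ((1 + τ n) * θ n / δ n) := by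
        have : (0:ℝ) < θ n / δ n := div_pos (lt_of_lt_of_le zero_lt_one (hθ n)) (hδ n)
        have := le_max_left (1 + θ n / δ n) ((1 + τ n) * θ n / δ n)
        linarith
      exact_mod_cast h2
    calc (1:EReal) = limsup (fun _ : ℕ => (1:EReal)) atTop := (limsup_const _).symm
      _ ≤ L := limsup_le_limsup (Eventually.of_forall h1)
  unfold irrationalityExponent
  apply sSup_le
  rintro μ ⟨m, rfl, hinf⟩
  by_contra hgt
  push_neg at hgt
  have hLtop : L ≠ ⊤ := fun h => by rw [h] at hgt; exact absurd hgt (by simp)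
  have hLbot : L ≠ ⊥ := by
    have hb1 : (⊥:EReal) < 1 := by rw [← EReal.coe_one]; exact EReal.bot_lt_coe 1
    exact (lt_of_lt_of_le hb1 hL1).ne'
  set t : ℝ := L.toReal with htdef
  have hLt : L = (t:EReal) := (EReal.coe_toReal hLtop hLbot).symm
  have htm : t < m := by rw [hLt] at hgt; exact_mod_cast hgt
  have ht1 : (1:ℝ) ≤ t := by rw [hLt] at hL1; exact_mod_cast hL1
  set s : ℝ := (t + m)/2 with hsdef
  set η : ℝ := (m - s)/2 with hηdef
  have hts : t < s := by rw [hsdef]; linarith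
  have hsm : s < m := by rw [hsdef]; linarith
  have hη0 : 0 < η := by rw [hηdef]; linarith
  have hs1 : 1 < s := lt_of_le_of_lt ht1 hts
  have hm0 : 0 < m := by linarith
  have hsum : s + 2*η = m := by rw [hηdef]; ring
  -- eventually the max is < s
  have hev : ∀ᶠ n in atTop, max (1 + θ n / δ n) ((1 + τ n) * θ n / δ n) < s := by
    have hLs : L < (s:EReal) := by rw [hLt]; exact_mod_cast hts
    have := Filter.eventually_lt_of_limsup_lt hLs
    exact this.mono (fun n hn => by exact_mod_cast hn)
  obtain ⟨N₀, hN₀⟩ := eventually_atTop.mp hev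
  have hqtend := aux_qtend α p q hq δ hδ c₁ c₂ hc₁ hc₂ hb₁ hb₂ htend
  set Cp : ℝ := max C 1 with hCpdef
  have hCp1 : (1:ℝ) ≤ Cp := le_max_right _ _
  have hCp0 : (0:ℝ) < Cp := lt_of_lt_of_le zero_lt_one hCp1
  set Q₁ : ℝ := max 2 (Real.exp (s * Real.log Cp / η)) with hQ₁def
  have hQ₁2 : (2:ℝ) ≤ Q₁ := le_max_left _ _
  obtain ⟨N₁, hN₁⟩ := eventually_atTop.mp (hqtend.eventually_ge_atTop Q₁)
  set N₂ : ℕ := max N₀ N₁ with hN₂def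
  set K : ℝ := max (max (2*c₂) (2*c₄/c₅)) 1 with hKdef
  have hK1 : (1:ℝ) ≤ K := le_max_right _ _
  have hK0 : (0:ℝ) < K := lt_of_lt_of_le zero_lt_one hK1
  have hKc₂ : 2*c₂ ≤ K := le_trans (le_max_left _ _) (le_max_left _ _)
  have hKc₄ : 2*c₄/c₅ ≤ K := le_trans (le_max_right _ _) (le_max_left _ _)
  obtain ⟨B₁, hB₁⟩ := eventually_atTop.mp
    ((tendsto_rpow_atTop (by linarith : (0:ℝ) < m - s)).eventually_ge_atTop (2*C*K^(s-1)))
  obtain ⟨B₂, hB₂⟩ := eventually_atTop.mp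
    ((tendsto_rpow_atTop hη0).eventually_ge_atTop (K^(s+η)/c₃))
  set B : ℝ := max (max B₁ B₂) (max ((q N₂ : ℝ)^(δ N₂)/K) 1) with hBdef
  -- positivity basics
  have hqpos : ∀ k, (0:ℝ) < (q k : ℝ) := fun k => by exact_mod_cast (hq k).trans_lt' zero_lt_one
  have hq1r : ∀ k, (1:ℝ) ≤ (q k : ℝ) := fun k => by exact_mod_cast hq k
  have hq'pos : ∀ k, (0:ℝ) < (q' k : ℝ) := fun k => by exact_mod_cast (hq' k).trans_lt' zero_lt_one
  have hq'1r : ∀ k, (1:ℝ) ≤ (q' k : ℝ) := fun k => by exact_mod_cast hq' k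
  -- KEY LEMMA
  have key : ∀ x : ℚ, B ≤ (x.den:ℝ) → (x.den:ℝ)^(-m) ≤ |α - (x:ℝ)| := by
    intro x hxB
    set b : ℝ := (x.den:ℝ) with hbdef
    have hb1 : (1:ℝ) ≤ b := by
      rw [hbdef]
      exact_mod_cast x.pos
    have hb0 : (0:ℝ) < b := lt_of_lt_of_le zero_lt_one hb1
    have hKb1 : (1:ℝ) ≤ K*b := by
      calc (1:ℝ) = 1*1 := by ring
        _ ≤ K*b := mul_le_mul hK1 hb1 zero_le_one hK0.le
    have hKb0 : (0:ℝ) < K*b := by positivity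
    -- choose n
    have hSex : ∃ k, N₂ ≤ k ∧ K*b < (q (k+1) : ℝ)^(δ (k+1)) := by
      obtain ⟨N, hN⟩ := eventually_atTop.mp (htend.eventually_gt_atTop (K*b))
      exact ⟨max N₂ N, le_max_left _ _, hN (max N₂ N + 1) (by omega)⟩
    set n : ℕ := Nat.find hSex with hndef
    obtain ⟨hn1, hn2⟩ := Nat.find_spec hSex
    have hn3 : (q n : ℝ)^(δ n) ≤ K*b := by
      rcases eq_or_lt_of_le hn1 with heq | hlt
      · have hBq : (q N₂ : ℝ)^(δ N₂)/K ≤ B := le_trans (le_max_left _ _) (le_max_right _ _)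
        rw [div_le_iff₀ hK0] at hBq
        have hN₂b : (q N₂ : ℝ)^(δ N₂) ≤ K*b :=
          calc (q N₂ : ℝ)^(δ N₂) ≤ B * K := hBq
            _ ≤ b * K := mul_le_mul_of_nonneg_right (le_trans hxB (le_refl _)) hK0.le
            _ = K * b := by ring
        have hne : n = N₂ := hndef.trans heq.symm
        rw [hne]
        exact hN₂b
      · have hmin := Nat.find_min hSex (show n - 1 < n by omega)
        push_neg at hmin
        have h1 : n - 1 + 1 = n := by omega
        have := hmin (by omega : N₂ ≤ n - 1)
        rw [h1] at this
        exact this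
    -- index facts
    have hnN₀ : N₀ ≤ n := le_trans (le_max_left _ _) hn1
    have hnN₁ : N₁ ≤ n := le_trans (le_max_right _ _) hn1
    have hmax := hN₀ n hnN₀
    have hθδ : 1 + θ n / δ n < s := lt_of_le_of_lt (le_max_left _ _) hmax
    have hτθδ : (1 + τ n) * θ n / δ n < s := lt_of_le_of_lt (le_max_right _ _) hmax
    have hqQ₁ : Q₁ ≤ (q n : ℝ) := hN₁ n hnN₁
    have hδn := hδ n
    have hθn := hθ n
    have hτn := hτ n
    -- q'^τ ≥ 2 c₄ b
    have hq'τ : 2*c₄*b ≤ (q' n : ℝ)^(τ n) := by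
      have h1 := hc₅' n
      have h2 : c₅ * (K*b) ≤ c₅ * (q (n+1) : ℝ)^(δ (n+1)) :=
        mul_le_mul_of_nonneg_left hn2.le hc₅.le
      have h3 : 2*c₄*b ≤ c₅*(K*b) := by
        have h4 : (2*c₄/c₅)*c₅ ≤ K*c₅ := mul_le_mul_of_nonneg_right hKc₄ hc₅.le
        rw [div_mul_cancel₀ _ (ne_of_gt hc₅)] at h4
        calc 2*c₄*b ≤ (K*c₅)*b := mul_le_mul_of_nonneg_right h4 hb0.le
          _ = c₅*(K*b) := by ring
      linarith
    -- common: (q n)^(θ n) ≤ (K*b)^(θ n/δ n)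
    have hqθ : (q n : ℝ)^(θ n) ≤ (K*b)^(θ n/δ n) := by
      have h1 : (q n : ℝ)^(θ n) = ((q n : ℝ)^(δ n))^(θ n/δ n) := by
        rw [← Real.rpow_mul (hqpos n).le]
        congr 1
        field_simp
      rw [h1]
      exact Real.rpow_le_rpow (Real.rpow_nonneg (hqpos n).le _) hn3
        (by positivity)
    by_cases hxe : (x:ℝ) = (p' n : ℝ)/(q' n : ℝ)
    · -- Case II : x = p'_n/q'_n
      have hlb : c₃ * (q' n : ℝ)^(-(1 + τ n)) ≤ |α - (x:ℝ)| := by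
        rw [hxe]; exact hb₃ n
      have hXle : (q' n : ℝ)^(1 + τ n) ≤ c₃ * b^m := by
        have e1 : (q' n : ℝ) ≤ Cp * (q n : ℝ)^(θ n) := by
          refine le_trans (ha n) ?_
          exact mul_le_mul_of_nonneg_right (le_max_left _ _) (Real.rpow_nonneg (hqpos n).le _)
        have e2 : (q' n : ℝ)^(1 + τ n) ≤ (Cp * (q n : ℝ)^(θ n))^(1 + τ n) :=
          Real.rpow_le_rpow (hq'pos n).le e1 (by linarith)
        have e3 : (Cp * (q n : ℝ)^(θ n))^(1 + τ n)
            = Cp^(1 + τ n) * ((q n : ℝ)^(θ n))^(1 + τ n) :=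
          Real.mul_rpow hCp0.le (Real.rpow_nonneg (hqpos n).le _)
        have e4 : ((q n : ℝ)^(θ n))^(1 + τ n) = (q n : ℝ)^(θ n * (1 + τ n)) :=
          (Real.rpow_mul (hqpos n).le _ _).symm
        have e5 : (q n : ℝ)^(θ n * (1 + τ n)) ≤ (K*b)^((1 + τ n) * θ n / δ n) := by
          have h1 : (q n : ℝ)^(θ n * (1 + τ n)) = ((q n : ℝ)^(δ n))^((1 + τ n) * θ n / δ n) := by
            rw [← Real.rpow_mul (hqpos n).le]
            congr 1
            field_simp
          rw [h1]
          exact Real.rpow_le_rpow (Real.rpow_nonneg (hqpos n).le _) hn3 (by positivity)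
        have e6 : (K*b)^((1 + τ n) * θ n / δ n) ≤ (K*b)^s :=
          Real.rpow_le_rpow_of_exponent_le hKb1 hτθδ.le
        have e7 : Cp^(1 + τ n) ≤ (K*b)^η := by
          have h1τδ : 1 + τ n ≤ s * δ n := by
            have h1 : (1 + τ n) * θ n ≤ s * δ n := ((div_lt_iff₀ hδn).mp hτθδ).le
            calc 1 + τ n = (1 + τ n) * 1 := by ring
              _ ≤ (1 + τ n) * θ n := mul_le_mul_of_nonneg_left hθn (by linarith)
              _ ≤ s * δ n := h1
          have hCexp : Cp^(1 + τ n) ≤ Cp^(s * δ n) :=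
            Real.rpow_le_rpow_of_exponent_le hCp1 h1τδ
          refine hCexp.trans ?_
          rw [Real.rpow_def_of_pos hCp0, Real.rpow_def_of_pos hKb0]
          apply Real.exp_le_exp.mpr
          have hlogC : 0 ≤ Real.log Cp := Real.log_nonneg hCp1
          have hlogQ₁ : s * Real.log Cp ≤ η * Real.log Q₁ := by
            have h2 : Real.exp (s * Real.log Cp / η) ≤ Q₁ := le_max_right _ _
            have h3 : s * Real.log Cp / η ≤ Real.log Q₁ := by
              have := Real.log_le_log (Real.exp_pos _) h2
              rwa [Real.log_exp] at this
            calc s * Real.log Cp = η * (s * Real.log Cp / η) := by field_simp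
              _ ≤ η * Real.log Q₁ := mul_le_mul_of_nonneg_left h3 hη0.le
          have hlogKb : δ n * Real.log Q₁ ≤ Real.log (K*b) := by
            have h4 : Real.log Q₁ ≤ Real.log (q n : ℝ) :=
              Real.log_le_log (by linarith : (0:ℝ) < Q₁) hqQ₁
            have h5 : δ n * Real.log (q n : ℝ) = Real.log ((q n : ℝ)^(δ n)) :=
              (Real.log_rpow (hqpos n) _).symm
            have h6 : Real.log ((q n : ℝ)^(δ n)) ≤ Real.log (K*b) :=
              Real.log_le_log (Real.rpow_pos_of_pos (hqpos n) _) hn3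
            calc δ n * Real.log Q₁ ≤ δ n * Real.log (q n : ℝ) :=
                  mul_le_mul_of_nonneg_left h4 hδn.le
              _ = Real.log ((q n : ℝ)^(δ n)) := h5
              _ ≤ Real.log (K*b) := h6
          have hlogQ₁pos : 0 < Real.log Q₁ :=
            lt_of_lt_of_le (Real.log_pos one_lt_two) (Real.log_le_log two_pos hQ₁2)
          calc Real.log Cp * (s * δ n) = (s * Real.log Cp) * δ n := by ring
            _ ≤ (η * Real.log Q₁) * δ n := mul_le_mul_of_nonneg_right hlogQ₁ hδn.le
            _ = η * (δ n * Real.log Q₁) := by ring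
            _ ≤ η * Real.log (K*b) := mul_le_mul_of_nonneg_left hlogKb hη0.le
            _ = Real.log (K*b) * η := by ring
        calc (q' n : ℝ)^(1 + τ n) ≤ Cp^(1 + τ n) * ((q n : ℝ)^(θ n))^(1 + τ n) := by
              rw [← e3]; exact e2
          _ = Cp^(1 + τ n) * (q n : ℝ)^(θ n * (1 + τ n)) := by rw [e4]
          _ ≤ (K*b)^η * (K*b)^s := by
              apply mul_le_mul e7 (e5.trans e6) (Real.rpow_nonneg (hqpos n).le _)
                (Real.rpow_nonneg hKb0.le _)
          _ = (K*b)^(η + s) := (Real.rpow_add hKb0 _ _).symm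
          _ = K^(η+s) * b^(η+s) := Real.mul_rpow hK0.le hb0.le
          _ ≤ (c₃ * b^η) * b^(η+s) := by
              have hB₂b : K^(s+η)/c₃ ≤ b^η := hB₂ b (le_trans (le_trans (le_max_right _ _) (le_max_left _ _)) hxB)
              have : K^(η+s) ≤ c₃ * b^η := by
                rw [div_le_iff₀ hc₃] at hB₂b
                calc K^(η+s) = K^(s+η) := by ring_nf
                  _ ≤ b^η * c₃ := hB₂b
                  _ = c₃ * b^η := by ring
              exact mul_le_mul_of_nonneg_right this (Real.rpow_nonneg hb0.le _)
          _ = c₃ * (b^η * b^(η+s)) := by ring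
          _ = c₃ * b^m := by
              have hexp : η + (η + s) = m := by linarith [hsum]
              rw [← Real.rpow_add hb0, hexp]
      -- conclude
      have hX0 : (0:ℝ) < (q' n : ℝ)^(1 + τ n) := Real.rpow_pos_of_pos (hq'pos n) _
      have hbm0 : (0:ℝ) < b^m := Real.rpow_pos_of_pos hb0 _
      refine le_trans ?_ hlb
      rw [Real.rpow_neg hb0.le, Real.rpow_neg (hq'pos n).le]
      have h1 : (c₃*b^m)⁻¹ ≤ ((q' n : ℝ)^(1+τ n))⁻¹ := by
        apply inv_anti₀ hX0 hXle
      calc (b^m)⁻¹ = c₃ * (c₃*b^m)⁻¹ := by field_simp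
        _ ≤ c₃ * ((q' n : ℝ)^(1+τ n))⁻¹ := mul_le_mul_of_nonneg_left h1 hc₃.le
    · -- Case I : x ≠ p'_n/q'_n
      have htri : 1/(b*(q' n : ℝ)) ≤ |(x:ℝ) - (p' n : ℝ)/(q' n : ℝ)| :=
        aux_rat_lb x (p' n) (q' n) (hq' n) hxe
      have hq'1 := hq'1r n
      have hq'0 := hq'pos n
      have hq'τpos : (0:ℝ) < (q' n:ℝ)^(τ n) := Real.rpow_pos_of_pos hq'0 _
      have hsmall : c₄*(q' n : ℝ)^(-(1+τ n)) ≤ 1/(2*(b*(q' n : ℝ))) := by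
        rw [Real.rpow_neg hq'0.le]
        have hsplit : (q' n : ℝ)^(1+τ n) = (q' n : ℝ) * (q' n : ℝ)^(τ n) := by
          rw [Real.rpow_add hq'0, Real.rpow_one]
        rw [hsplit]
        have h1 : (q' n:ℝ) * (2*c₄*b) ≤ (q' n:ℝ) * (q' n:ℝ)^(τ n) :=
          mul_le_mul_of_nonneg_left hq'τ hq'0.le
        have h2 : ((q' n:ℝ) * (q' n:ℝ)^(τ n))⁻¹ ≤ ((q' n:ℝ) * (2*c₄*b))⁻¹ :=
          inv_anti₀ (by positivity) h1
        calc c₄ * ((q' n:ℝ) * (q' n:ℝ)^(τ n))⁻¹ ≤ c₄ * ((q' n:ℝ) * (2*c₄*b))⁻¹ :=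
              mul_le_mul_of_nonneg_left h2 hc₄.le
          _ = 1/(2*(b*(q' n:ℝ))) := by
              field_simp
      have habx : 1/(2*(b*(q' n:ℝ))) ≤ |α - (x:ℝ)| := by
        have ht2 : |(x:ℝ) - (p' n:ℝ)/(q' n:ℝ)| ≤ |(x:ℝ) - α| + |α - (p' n:ℝ)/(q' n:ℝ)| :=
          abs_sub_le _ _ _
        have ht3 : |(x:ℝ) - α| = |α - (x:ℝ)| := abs_sub_comm _ _
        have hb4 := (hb₄ n).trans hsmall
        have ht4 := htri.trans ht2
        rw [ht3] at ht4
        have h5 : 1/(b*(q' n:ℝ)) - 1/(2*(b*(q' n:ℝ))) = 1/(2*(b*(q' n:ℝ))) := by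
          field_simp
          ring
        linarith
      have hq'b : (q' n:ℝ) ≤ C*(K*b)^(s-1) := by
        calc (q' n:ℝ) ≤ C * (q n:ℝ)^(θ n) := ha n
          _ ≤ C * (K*b)^(θ n/δ n) := mul_le_mul_of_nonneg_left hqθ hC.le
          _ ≤ C * (K*b)^(s-1) := mul_le_mul_of_nonneg_left
              (Real.rpow_le_rpow_of_exponent_le hKb1 (by linarith [hθδ])) hC.le
      have hfin : 2*(b*(q' n:ℝ)) ≤ b^m := by
        have hB₁b : 2*C*K^(s-1) ≤ b^(m-s) :=
          hB₁ b (le_trans (le_trans (le_max_left _ _) (le_max_left _ _)) hxB)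
        have h6 : (K*b)^(s-1) = K^(s-1) * b^(s-1) := Real.mul_rpow hK0.le hb0.le
        have h7 : b^(s-1) * b = b^s := by
          calc b^(s-1)*b = b^(s-1)*b^(1:ℝ) := by rw [Real.rpow_one]
            _ = b^(s-1+1) := (Real.rpow_add hb0 _ _).symm
            _ = b^s := by norm_num
        calc 2*(b*(q' n:ℝ)) ≤ 2*(b*(C*(K^(s-1)*b^(s-1)))) := by
              rw [← h6]
              exact mul_le_mul_of_nonneg_left (mul_le_mul_of_nonneg_left hq'b hb0.le) (by norm_num)
          _ = (2*C*K^(s-1)) * (b^(s-1) * b) := by ring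
          _ ≤ b^(m-s) * (b^(s-1)*b) := mul_le_mul_of_nonneg_right hB₁b (by positivity)
          _ = b^(m-s) * b^s := by rw [h7]
          _ = b^m := by
              rw [← Real.rpow_add hb0]
              congr 1
              ring
      rw [Real.rpow_neg hb0.le]
      refine le_trans ?_ habx
      rw [one_div]
      exact inv_anti₀ (by positivity) hfin
  -- derive contradiction with hinf
  set Bn : ℕ := ⌈B⌉₊ with hBn
  have hsub : {x : ℚ | |α - (x:ℝ)| < (x.den:ℝ)^(-m)} ⊆
      {x : ℚ | x.den ≤ Bn ∧ |α - (x:ℝ)| ≤ 1} := by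
    intro x hx
    simp only [Set.mem_setOf_eq] at hx ⊢
    constructor
    · by_contra hden
      push_neg at hden
      have hBx : B ≤ (x.den:ℝ) := by
        have h1 : B ≤ (Bn:ℝ) := Nat.le_ceil B
        have h2 : (Bn:ℝ) ≤ (x.den:ℝ) := by exact_mod_cast (le_of_lt hden)
        linarith
      exact absurd hx (not_lt.mpr (key x hBx))
    · have hd1 : (1:ℝ) ≤ (x.den:ℝ) := by exact_mod_cast x.pos
      have h3 : (x.den:ℝ)^(-m) ≤ 1 := Real.rpow_le_one_of_one_le_of_nonpos hd1 (by linarith)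
      linarith [hx]
  exact hinf ((aux_fin α Bn).subset hsub)
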